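/- Let $X = e_1 \in \mathbb{R}^d$ and $z_0 \in \mathbb{C}$ with $\mathrm{Re}\, z_0 = (\mathrm{Im}\, z_0)^2$ and $\mathrm{Re}\, z_0 > 0$. For $\epsilon > 0$ define $p_{z_0,\epsilon}(\xi) = |\xi|^2 + \epsilon(1-\epsilon) + i(1-2\epsilon)\xi_1 - z_0$ for $\xi \in \mathbb{R}^d$. Then there exist $c > 0$ and $\epsilon_0 > 0$ such that for all $0 < \epsilon < \epsilon_0$ and all $\xi \in \mathbb{R}^d$, $|p_{z_0,\epsilon}(\xi)| \ge c\,\epsilon\, (1 + |\xi|^2)$. -/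

import Mathlib

set_option maxHeartbeats 1000000 in
lemma key_ineq (s δ ε t x : ℝ) (hS : 0 < |s|)
    (hδ1 : δ ≤ 1/4) (hδ2 : 10 * δ ≤ |s|) (hδ0 : 0 < δ)
    (hε : 0 < ε) (hε2 : ε < 1/2) (ht0 : 0 ≤ t) (hxt : x ^ 2 ≤ t) :
    δ / (2 * s ^ 2 + 4) * ε * (1 + t) ≤
      max |t + ε * (1 - ε) - s ^ 2| |(1 - 2 * ε) * x - s| := by
  have hS2 : |s| ^ 2 = s ^ 2 := sq_abs s
  have hM : (4 : ℝ) ≤ 2 * s ^ 2 + 4 := by nlinarith [sq_nonneg s]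
  have hM0 : (0 : ℝ) < 2 * s ^ 2 + 4 := by linarith
  by_cases h1 : 2 * s ^ 2 + 1 ≤ t
  · refine le_trans ?_ (le_max_left _ _)
    have hc : δ / (2 * s ^ 2 + 4) ≤ 1 / 16 := by
      calc δ / (2 * s ^ 2 + 4) ≤ (1/4) / 4 := by
            exact div_le_div₀ (by norm_num) hδ1 (by norm_num) hM
        _ = 1/16 := by norm_num
    have hA : t + ε * (1 - ε) - s ^ 2 ≤ |t + ε * (1 - ε) - s ^ 2| := le_abs_self _
    nlinarith [mul_nonneg (mul_nonneg (le_of_lt hε) ht0) (sub_nonneg.2 hc),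
      mul_pos hε (by linarith : (0:ℝ) < 1 - ε),
      mul_nonneg (sub_nonneg.2 hc) (le_of_lt hε)]
  · push_neg at h1
    have hcb : δ / (2 * s ^ 2 + 4) * ε * (1 + t) ≤ δ * ε := by
      have h2 : 1 + t ≤ 2 * s ^ 2 + 4 := by linarith
      have := div_mul_cancel₀ δ (ne_of_gt hM0)
      have hnn : 0 ≤ δ / (2 * s ^ 2 + 4) := by positivity
      nlinarith [mul_nonneg hnn hε.le]
    refine le_trans hcb ?_
    by_cases h2 : δ * ε ≤ |t + ε * (1 - ε) - s ^ 2|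
    · exact le_trans h2 (le_max_left _ _)
    · refine le_trans ?_ (le_max_right _ _)
      push_neg at h2
      by_contra h3
      push_neg at h3
      rw [abs_lt] at h2 h3
      -- lower bound on |(1-2ε)x|
      have hu : |s| - δ * ε ≤ |(1 - 2*ε) * x| := by
        have h4 := abs_sub_abs_le_abs_sub s ((1 - 2*ε) * x)
        have h5 : |s - (1 - 2*ε) * x| = |(1 - 2*ε) * x - s| := abs_sub_comm _ _
        have h6 : |(1 - 2*ε) * x - s| < δ * ε := abs_lt.2 h3
        linarith
      have hSδ : 0 ≤ |s| - δ * ε := by nlinarith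
      have h7 : (|s| - δ * ε) ^ 2 ≤ ((1 - 2*ε) * x) ^ 2 := by
        calc (|s| - δ * ε) ^ 2 ≤ |(1 - 2*ε) * x| ^ 2 := by
              exact pow_le_pow_left₀ hSδ hu 2
          _ = ((1 - 2*ε) * x) ^ 2 := sq_abs _
      have h8 : (1 + 4*ε) * ((1 - 2*ε) * x) ^ 2 ≤ x ^ 2 := by
        nlinarith [mul_nonneg (mul_nonneg (sq_nonneg x) (sq_nonneg ε))
          (by linarith : (0:ℝ) ≤ 3 - 4*ε), sq_nonneg x]
      have h9 : (1 + 4*ε) * (|s| - δ * ε) ^ 2 ≤ t := by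
        have : (1 + 4*ε) * (|s| - δ * ε) ^ 2 ≤ (1 + 4*ε) * ((1 - 2*ε) * x) ^ 2 :=
          mul_le_mul_of_nonneg_left h7 (by linarith)
        linarith
      set S := |s| with hSdef
      -- contradiction, step by step
      have e1 : S^2 + 4*ε*S^2 - 2*S*δ*ε - 8*S*δ*ε^2 ≤ (1 + 4*ε) * (S - δ * ε) ^ 2 := by
        nlinarith [sq_nonneg (δ*ε), mul_nonneg hε.le (sq_nonneg (δ*ε))]
      have e2 : 8*S*δ*ε^2 ≤ 4*S*δ*ε := by
        nlinarith [mul_nonneg (mul_nonneg (mul_nonneg hS.le hδ0.le) hε.le)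
          (by linarith : (0:ℝ) ≤ 1 - 2*ε)]
      have e3 : 10*S*δ*ε ≤ S^2*ε := by
        nlinarith [mul_le_mul_of_nonneg_left hδ2 (mul_nonneg hS.le hε.le)]
      have e4 : ε^2 ≤ ε/2 := by nlinarith
      have e5 : δ*ε ≤ ε/4 := by nlinarith
      have e6 : 0 ≤ ε*S^2 := mul_nonneg hε.le (sq_nonneg _)
      linarith [e1, e2, e3, e4, e5, e6, h9, h2.2, hS2]

theorem stmt_12 (d : ℕ) (hd : 0 < d) (z₀ : ℂ)
    (hz₀ : z₀.re = z₀.im ^ 2) (hz₀pos : 0 < z₀.re) :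
    ∃ c > 0, ∃ ε₀ > 0, ∀ ε : ℝ, 0 < ε → ε < ε₀ →
      ∀ ξ : EuclideanSpace ℝ (Fin d),
        c * ε * (1 + ‖ξ‖ ^ 2) ≤
          ‖((‖ξ‖ ^ 2 + ε * (1 - ε) : ℝ) +
            Complex.I * ((1 - 2 * ε) * ξ ⟨0, hd⟩ : ℝ) - z₀ : ℂ)‖ := by
  set s := z₀.im with hs_def
  have hs : 0 < |s| := by
    rcases eq_or_ne s 0 with h | h
    · rw [hz₀, h] at hz₀pos; norm_num at hz₀pos
    · exact abs_pos.2 h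
  set δ : ℝ := min (1/4) (|s|/10) with hδdef
  have hδ0 : 0 < δ := lt_min (by norm_num) (by positivity)
  have hδ1 : δ ≤ 1/4 := min_le_left _ _
  have hδ2 : 10 * δ ≤ |s| := by
    have := min_le_right (1/4 : ℝ) (|s|/10); linarith
  refine ⟨δ / (2 * s ^ 2 + 4), by positivity, 1/2, by norm_num, ?_⟩
  intro ε hε hε2 ξ
  set x : ℝ := ξ ⟨0, hd⟩ with hxdef
  have hxt : x ^ 2 ≤ ‖ξ‖ ^ 2 := by
    rw [EuclideanSpace.norm_eq, Real.sq_sqrt (by positivity)]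
    have : ‖ξ ⟨0, hd⟩‖ ^ 2 ≤ ∑ i, ‖ξ i‖ ^ 2 :=
      Finset.single_le_sum (f := fun i => ‖ξ i‖ ^ 2) (fun i _ => by positivity) (Finset.mem_univ _)
    simpa [Real.norm_eq_abs, sq_abs] using this
  set w : ℂ := ((‖ξ‖ ^ 2 + ε * (1 - ε) : ℝ) +
      Complex.I * ((1 - 2 * ε) * x : ℝ) - z₀) with hwdef
  have hre : w.re = ‖ξ‖ ^ 2 + ε * (1 - ε) - s ^ 2 := by
    simp [hwdef, hz₀, ← Complex.ofReal_pow]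
  have him : w.im = (1 - 2 * ε) * x - s := by
    simp [hwdef, ← Complex.ofReal_pow, hs_def]
  have hkey := key_ineq s δ ε (‖ξ‖ ^ 2) x hs hδ1 hδ2 hδ0 hε (by linarith)
    (by positivity) hxt
  refine le_trans hkey (max_le ?_ ?_)
  · rw [← hre]; exact Complex.abs_re_le_norm w
  · rw [← him]; exact Complex.abs_im_le_norm w
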